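/- Let M be an additive commutative monoid, let n ≥ 1, and let v : Fin n → M. Define X : ℕ → Fin n → M by X 0 i = 0 and X (k+1) i = v i + X k (i + 1), where i + 1 denotes the cyclic successor in Fin n (wraparound addition). Then for every i : Fin n, X n i = ∑_{j : Fin n} v j. -/

import Mathlib

/-- Correctness of the `sum[0̲, ⊕]` construction: starting from the zero vector and
repeatedly applying a cyclic rotation step followed by pointwise addition with `v`,
after `n` iterations every entry equals the total sum of the entries of `v`. -/
theorem rotate_sum_correct (M : Type*) [AddCommMonoid M] (n : ℕ) [NeZero n]
    (v : Fin n → M) (X : ℕ → Fin n → M)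
    (hX0 : ∀ i, X 0 i = 0)
    (hX : ∀ k i, X (k + 1) i = v i + X k (i + 1)) :
    ∀ i : Fin n, X n i = ∑ j : Fin n, v j := by
  open Fin.NatCast in
  have key : ∀ k i, X k i = ∑ j ∈ Finset.range k, v (i + (j : Fin n)) := by
    intro k
    induction k with
    | zero => intro i; simp [hX0]
    | succ k ih =>
      intro i
      rw [hX, ih, Finset.sum_range_succ']
      simp only [Nat.cast_add, Nat.cast_one, Nat.cast_zero, add_zero]
      rw [add_comm]
      congr 1
      apply Finset.sum_congr rfl
      intro j _
      congr 1
      abel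
  intro i
  rw [key n i, ← Fin.sum_univ_eq_sum_range]
  exact Fintype.sum_equiv (Equiv.addLeft i) _ _ (fun j => by simp [Fin.cast_val_eq_self])
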